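/- arXiv:2010.15354 — 3 statements merged into one kernel-verified Lean document; each statement's English description precedes it below -/
import Mathlib

section
/- The function g(x, y) = -log₂(1 - |x|²/y) defined on the set {(x,y) ∈ ℂ × ℝ : y > |x|²} is jointly convex in (x, y). -/
open Set Real

/-- quadratic over linear is convex -/
lemma quadOverLin_convexOn :
    ConvexOn ℝ {p : ℂ × ℝ | ‖p.1‖ ^ 2 < p.2}
      (fun p : ℂ × ℝ => ‖p.1‖ ^ 2 / p.2) := by
  have habs : ∀ (a b : ℝ) (x u : ℂ), 0 ≤ a → 0 ≤ b →
      ‖(a • x + b • u)‖ ≤ a * ‖x‖ + b * ‖u‖ := by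
    intro a b x u ha hb
    calc ‖(a • x + b • u)‖ ≤ ‖(a • x)‖ + ‖(b • u)‖ :=
          norm_add_le _ _
      _ = a * ‖x‖ + b * ‖u‖ := by
          rw [norm_smul, norm_smul, Real.norm_eq_abs,
            abs_of_nonneg ha, Real.norm_eq_abs, abs_of_nonneg hb]
  have hS : Convex ℝ {p : ℂ × ℝ | ‖p.1‖ ^ 2 < p.2} := by
    intro p hp q hq a b ha hb hab
    simp only [mem_setOf_eq] at *
    have h2 : ‖(a • p.1 + b • q.1)‖ ^ 2
        ≤ (a * ‖p.1‖ + b * ‖q.1‖) ^ 2 :=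
      pow_le_pow_left₀ (norm_nonneg _) (habs a b p.1 q.1 ha hb) 2
    show ‖(a • p.1 + b • q.1)‖ ^ 2 < a * p.2 + b * q.2
    rcases ha.eq_or_lt with h | h
    · have hb1 : b = 1 := by linarith
      subst hb1
      simp only [← h, zero_smul, zero_add, one_smul, zero_mul, one_mul] at *
      exact hq
    · nlinarith [mul_lt_mul_of_pos_left hp h, mul_le_mul_of_nonneg_left hq.le hb,
        mul_nonneg (mul_nonneg ha hb) (sq_nonneg (‖p.1‖ - ‖q.1‖))]
  refine ⟨hS, ?_⟩
  intro p hp q hq a b ha hb hab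
  simp only [mem_setOf_eq] at hp hq
  set A := ‖p.1‖ with hA
  set B := ‖q.1‖ with hB
  have hy : (0:ℝ) < p.2 := lt_of_le_of_lt (sq_nonneg _) hp
  have hv : (0:ℝ) < q.2 := lt_of_le_of_lt (sq_nonneg _) hq
  have hD : (0:ℝ) < a * p.2 + b * q.2 := by
    rcases ha.eq_or_lt with h | h
    · have hb1 : b = 1 := by linarith
      rw [← h, hb1]; simpa using hv
    · nlinarith [mul_nonneg hb hv.le]
  have h2 : ‖(a • p.1 + b • q.1)‖ ^ 2 ≤ (a * A + b * B) ^ 2 :=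
    pow_le_pow_left₀ (norm_nonneg _) (habs a b p.1 q.1 ha hb) 2
  have key : (a * A + b * B) ^ 2 * (p.2 * q.2)
      ≤ (a * A ^ 2 * q.2 + b * B ^ 2 * p.2) * (a * p.2 + b * q.2) := by
    nlinarith [mul_nonneg (mul_nonneg ha hb) (sq_nonneg (A * q.2 - B * p.2))]
  have hRHS : a * (A ^ 2 / p.2) + b * (B ^ 2 / q.2)
      = (a * A ^ 2 * q.2 + b * B ^ 2 * p.2) / (p.2 * q.2) := by
    field_simp
  show ‖((a • p + b • q).1)‖ ^ 2 / (a • p + b • q).2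
      ≤ a * (A ^ 2 / p.2) + b * (B ^ 2 / q.2)
  have h1 : (a • p + b • q).1 = a • p.1 + b • q.1 := rfl
  have h2' : (a • p + b • q).2 = a * p.2 + b * q.2 := rfl
  rw [h1, h2', hRHS, div_le_div_iff₀ hD (mul_pos hy hv)]
  calc ‖(a • p.1 + b • q.1)‖ ^ 2 * (p.2 * q.2)
      ≤ (a * A + b * B) ^ 2 * (p.2 * q.2) :=
        mul_le_mul_of_nonneg_right h2 (mul_pos hy hv).le
    _ ≤ (a * A ^ 2 * q.2 + b * B ^ 2 * p.2) * (a * p.2 + b * q.2) := key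

lemma neg_logb_convexOn_Ioi :
    ConvexOn ℝ (Ioi (0:ℝ)) (fun t => -Real.logb 2 t) := by
  have hneg : ConvexOn ℝ (Ioi (0:ℝ)) (fun t => -Real.log t) :=
    strictConcaveOn_log_Ioi.concaveOn.neg
  have hsm := hneg.smul (le_of_lt (by positivity : (0:ℝ) < (Real.log 2)⁻¹))
  have heq : (fun t => -Real.logb 2 t)
      = (Real.log 2)⁻¹ • (fun t => -Real.log t) := by
    funext t
    simp [Real.logb, smul_eq_mul, div_eq_inv_mul]
  rw [heq]
  exact hsm

/-- The function `g(x, y) = -log₂(1 - |x|²/y)` is jointly convex on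
`{(x,y) ∈ ℂ × ℝ : y > |x|²}`. -/
theorem neg_logb_one_sub_sq_div_convexOn :
    ConvexOn ℝ {p : ℂ × ℝ | ‖p.1‖ ^ 2 < p.2}
      (fun p : ℂ × ℝ => -Real.logb 2 (1 - ‖p.1‖ ^ 2 / p.2)) := by
  refine ⟨quadOverLin_convexOn.1, ?_⟩
  intro p hp q hq a b ha hb hab
  simp only [mem_setOf_eq] at hp hq
  have hy : (0:ℝ) < p.2 := lt_of_le_of_lt (sq_nonneg _) hp
  have hv : (0:ℝ) < q.2 := lt_of_le_of_lt (sq_nonneg _) hq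
  have hfp : (0:ℝ) < 1 - ‖p.1‖ ^ 2 / p.2 := by
    have : ‖p.1‖ ^ 2 / p.2 < 1 := (div_lt_one hy).mpr hp
    linarith
  have hfq : (0:ℝ) < 1 - ‖q.1‖ ^ 2 / q.2 := by
    have : ‖q.1‖ ^ 2 / q.2 < 1 := (div_lt_one hv).mpr hq
    linarith
  have hcomb : (0:ℝ) < a * (1 - ‖p.1‖ ^ 2 / p.2)
      + b * (1 - ‖q.1‖ ^ 2 / q.2) := by
    rcases ha.eq_or_lt with h | h
    · have hb1 : b = 1 := by linarith
      rw [← h, hb1]; simpa using hfq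
    · nlinarith [mul_nonneg hb hfq.le]
  -- concavity of the inner function
  have hq2 := quadOverLin_convexOn.2 hp hq ha hb hab
  simp only [smul_eq_mul] at hq2
  have hinner : a * (1 - ‖p.1‖ ^ 2 / p.2) + b * (1 - ‖q.1‖ ^ 2 / q.2)
      ≤ 1 - ‖((a • p + b • q).1)‖ ^ 2 / (a • p + b • q).2 := by
    have : a * 1 + b * 1 = 1 := by rw [mul_one, mul_one]; exact hab
    nlinarith [hq2]
  have hcombIn : (0:ℝ) < 1 - ‖((a • p + b • q).1)‖ ^ 2 / (a • p + b • q).2 :=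
    lt_of_lt_of_le hcomb hinner
  -- monotonicity of logb
  have hmono : Real.logb 2 (a * (1 - ‖p.1‖ ^ 2 / p.2)
        + b * (1 - ‖q.1‖ ^ 2 / q.2))
      ≤ Real.logb 2 (1 - ‖((a • p + b • q).1)‖ ^ 2 / (a • p + b • q).2) :=
    (Real.logb_le_logb one_lt_two hcomb hcombIn).mpr hinner
  -- convexity of -logb on Ioi 0
  have hconv := neg_logb_convexOn_Ioi.2 (mem_Ioi.mpr hfp) (mem_Ioi.mpr hfq) ha hb hab
  simp only [smul_eq_mul] at hconv
  show -Real.logb 2 (1 - ‖((a • p + b • q).1)‖ ^ 2 / (a • p + b • q).2)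
      ≤ a * -Real.logb 2 (1 - ‖p.1‖ ^ 2 / p.2)
        + b * -Real.logb 2 (1 - ‖q.1‖ ^ 2 / q.2)
  calc -Real.logb 2 (1 - ‖((a • p + b • q).1)‖ ^ 2 / (a • p + b • q).2)
      ≤ -Real.logb 2 (a * (1 - ‖p.1‖ ^ 2 / p.2)
          + b * (1 - ‖q.1‖ ^ 2 / q.2)) := by linarith
    _ ≤ a * -Real.logb 2 (1 - ‖p.1‖ ^ 2 / p.2)
        + b * -Real.logb 2 (1 - ‖q.1‖ ^ 2 / q.2) := hconv
end

section
/- For all complex numbers x, x̂ and reals b, b̂ > 0: log₂(1 + |x|²/b) ≥ log₂(1 + |x̂|²/b̂) + 2Re(x̂* x)/(b̂ ln 2) - (b + |x|²)|x̂|²/((b̂ + |x̂|²) b̂ ln 2) - |x̂|²/(b̂ ln 2), with equality when x = x̂ and b = b̂. -/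
/-- Path-following lower bound for the rate function `log₂(1 + |x|²/b)`:
for all `x, x̂ ∈ ℂ` and `b, b̂ > 0`,
`log₂(1+|x|²/b) ≥ log₂(1+|x̂|²/b̂) + 2Re(x̂* x)/(b̂ ln 2)
  - (b+|x|²)|x̂|²/((b̂+|x̂|²) b̂ ln 2) - |x̂|²/(b̂ ln 2)`,
with equality when `x = x̂` and `b = b̂`. -/
theorem rate_taylor_lower_bound (x xh : ℂ) (b bh : ℝ) (hb : 0 < b) (hbh : 0 < bh) :
    (Real.logb 2 (1 + ‖xh‖ ^ 2 / bh)
        + 2 * ((starRingEnd ℂ) xh * x).re / (bh * Real.log 2)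
        - (b + ‖x‖ ^ 2) * ‖xh‖ ^ 2
            / ((bh + ‖xh‖ ^ 2) * bh * Real.log 2)
        - ‖xh‖ ^ 2 / (bh * Real.log 2)
      ≤ Real.logb 2 (1 + ‖x‖ ^ 2 / b)) ∧
    (x = xh → b = bh →
      Real.logb 2 (1 + ‖x‖ ^ 2 / b)
        = Real.logb 2 (1 + ‖xh‖ ^ 2 / bh)
          + 2 * ((starRingEnd ℂ) xh * x).re / (bh * Real.log 2)
          - (b + ‖x‖ ^ 2) * ‖xh‖ ^ 2
              / ((bh + ‖xh‖ ^ 2) * bh * Real.log 2)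
          - ‖xh‖ ^ 2 / (bh * Real.log 2)) := by
  have hL2 : (0 : ℝ) < Real.log 2 := Real.log_pos one_lt_two
  set a := ‖x‖ ^ 2 with ha_def
  set ah := ‖xh‖ ^ 2 with hah_def
  have ha0 : 0 ≤ a := sq_nonneg _
  have hah0 : 0 ≤ ah := sq_nonneg _
  set R := ((starRingEnd ℂ) xh * x).re with hR_def
  have hy : (0 : ℝ) < b + a := by linarith
  have hyh : (0 : ℝ) < bh + ah := by linarith
  constructor
  · -- key polynomial inequality: |(bh+ah)·x - (b+a)·xh|² ≥ 0
    have hkey : 0 ≤ a * (bh + ah) ^ 2 - 2 * R * (b + a) * (bh + ah) + ah * (b + a) ^ 2 := by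
      have hx : a = x.re ^ 2 + x.im ^ 2 := by
        rw [ha_def, Complex.sq_norm, Complex.normSq_apply]; ring
      have hxh : ah = xh.re ^ 2 + xh.im ^ 2 := by
        rw [hah_def, Complex.sq_norm, Complex.normSq_apply]; ring
      have hR : R = xh.re * x.re + xh.im * x.im := by
        simp [hR_def, Complex.mul_re]
      have hident : a * (bh + ah) ^ 2 - 2 * R * (b + a) * (bh + ah) + ah * (b + a) ^ 2
          = ((bh + ah) * x.re - (b + a) * xh.re) ^ 2
            + ((bh + ah) * x.im - (b + a) * xh.im) ^ 2 := by
        rw [hx, hxh, hR]; ring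
      rw [hident]; positivity
    -- tangent inequality for log
    have hlt : (0 : ℝ) < b * (bh + ah) / ((b + a) * bh) := by positivity
    have hlog0 := Real.log_le_sub_one_of_pos hlt
    have e3 : Real.log (b * (bh + ah) / ((b + a) * bh))
        = Real.log b + Real.log (bh + ah) - (Real.log (b + a) + Real.log bh) := by
      rw [Real.log_div (by positivity) (by positivity),
        Real.log_mul (ne_of_gt hb) (ne_of_gt hyh),
        Real.log_mul (ne_of_gt hy) (ne_of_gt hbh)]
    have hlog : 1 - b * (bh + ah) / ((b + a) * bh)
        ≤ (Real.log (b + a) - Real.log b) - (Real.log (bh + ah) - Real.log bh) := by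
      rw [e3] at hlog0; linarith
    have hfrac : 2 * R / bh - (b + a) * ah / ((bh + ah) * bh) - ah / bh
        ≤ 1 - b * (bh + ah) / ((b + a) * bh) := by
      have h : 0 ≤ (a * (bh + ah) ^ 2 - 2 * R * (b + a) * (bh + ah) + ah * (b + a) ^ 2)
          / ((b + a) * (bh + ah) * bh) := div_nonneg hkey (by positivity)
      have heq : (a * (bh + ah) ^ 2 - 2 * R * (b + a) * (bh + ah) + ah * (b + a) ^ 2)
          / ((b + a) * (bh + ah) * bh)
          = (1 - b * (bh + ah) / ((b + a) * bh))
            - (2 * R / bh - (b + a) * ah / ((bh + ah) * bh) - ah / bh) := by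
        field_simp
        ring
      rw [heq] at h; linarith
    have main : Real.log ((bh + ah) / bh) + (2 * R / bh - (b + a) * ah / ((bh + ah) * bh) - ah / bh)
        ≤ Real.log ((b + a) / b) := by
      rw [Real.log_div (ne_of_gt hy) (ne_of_gt hb), Real.log_div (ne_of_gt hyh) (ne_of_gt hbh)]
      linarith
    calc Real.logb 2 (1 + ah / bh) + 2 * R / (bh * Real.log 2)
          - (b + a) * ah / ((bh + ah) * bh * Real.log 2) - ah / (bh * Real.log 2)
        = (Real.log ((bh + ah) / bh)
            + (2 * R / bh - (b + a) * ah / ((bh + ah) * bh) - ah / bh)) / Real.log 2 := by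
          rw [Real.logb, show (1 : ℝ) + ah / bh = (bh + ah) / bh by field_simp]
          field_simp
          ring
      _ ≤ Real.log ((b + a) / b) / Real.log 2 := by
          gcongr
      _ = Real.logb 2 (1 + a / b) := by
          rw [Real.logb, show (1 : ℝ) + a / b = (b + a) / b by field_simp]
  · rintro rfl rfl
    have hR : R = ah := by
      rw [hR_def, hah_def, Complex.sq_norm, Complex.normSq_apply]
      simp [Complex.mul_re]
    rw [hR]
    field_simp
    ring
end

section
/- If X: C → ℝ is nonnegative and Y: C → ℝ is positive on a set C, then the iteration z⁽ˡ⁾ = √(X(w⁽ˡ⁻¹⁾))/Y(w⁽ˡ⁻¹⁾), w⁽ˡ⁾ ∈ argmax_{w∈C} [2z⁽ˡ⁾√(X(w)) - (z⁽ˡ⁾)² Y(w)] produces a nondecreasing sequence of ratios X(w⁽ˡ⁾)/Y(w⁽ˡ⁾). -/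
/-- Monotonicity of the quadratic transform for fractional programming:
maximizing `2z√X(w) - z²Y(w)` with `z` computed from the previous iterate
produces a nondecreasing sequence of ratios `X/Y`. -/
theorem quadratic_transform_monotone {α : Type*} (C : Set α) (X Y : α → ℝ)
    (hX : ∀ w ∈ C, 0 ≤ X w) (hY : ∀ w ∈ C, 0 < Y w)
    (w : ℕ → α) (hw : ∀ l, w l ∈ C)
    (hmax : ∀ l, ∀ v ∈ C,
      2 * (Real.sqrt (X (w l)) / Y (w l)) * Real.sqrt (X v)
          - (Real.sqrt (X (w l)) / Y (w l)) ^ 2 * Y v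
        ≤ 2 * (Real.sqrt (X (w l)) / Y (w l)) * Real.sqrt (X (w (l + 1)))
          - (Real.sqrt (X (w l)) / Y (w l)) ^ 2 * Y (w (l + 1))) :
    ∀ l, X (w l) / Y (w l) ≤ X (w (l + 1)) / Y (w (l + 1)) := by
  intro l
  have h1 := hmax l (w l) (hw l)
  set z : ℝ := Real.sqrt (X (w l)) / Y (w l) with hz
  have hY0 : 0 < Y (w l) := hY _ (hw l)
  have hY1 : 0 < Y (w (l + 1)) := hY _ (hw (l + 1))
  have hs0 : Real.sqrt (X (w l)) ^ 2 = X (w l) := Real.sq_sqrt (hX _ (hw l))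
  have hs1 : Real.sqrt (X (w (l + 1))) ^ 2 = X (w (l + 1)) :=
    Real.sq_sqrt (hX _ (hw (l + 1)))
  -- value of the surrogate at the previous point equals the ratio
  have h2 : X (w l) / Y (w l)
      = 2 * z * Real.sqrt (X (w l)) - z ^ 2 * Y (w l) := by
    rw [hz]
    field_simp
    linear_combination (-1 : ℝ) * hs0
  -- surrogate at new point is below its ratio
  have h3 : 2 * z * Real.sqrt (X (w (l + 1))) - z ^ 2 * Y (w (l + 1))
      ≤ X (w (l + 1)) / Y (w (l + 1)) := by
    rw [le_div_iff₀ hY1]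
    nlinarith [sq_nonneg (Real.sqrt (X (w (l + 1))) - z * Y (w (l + 1))), hs1]
  linarith [h2 ▸ h1]
end
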